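/- arXiv:2505.16082 — 3 statements merged into one kernel-verified Lean document; each statement's English description precedes it below -/
import Mathlib

section
/- Let $\mathcal{T}$ be a finite set, $h$ a probability mass function on $\mathcal{T}$, and for each $t \in \mathcal{T}$ let $f(\cdot\mid t)$ and $g(\cdot\mid t)$ be probability measures on $\mathbb{R}^d$. Define the kernel $K((y,t),(y',t')) = K_y(y,y')\,\mathbf{1}[t=t']$, where $K_y$ is a positive definite kernel with all the relevant cross-expectations finite. Then the squared maximum mean discrepancy between the joint distributions $f(y,t)=f(y\mid t)h(t)$ and $g(y,t)=g(y\mid t)h(t)$ decomposes as $\mathrm{MMD}_K^2(f,g) = \sum_{t\in\mathcal{T}} h(t)^2\, \mathrm{MMD}_{K_y}^2(f(\cdot\mid t), g(\cdot\mid t))$. -/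
open MeasureTheory NNReal

/-- Squared maximum mean discrepancy between two measures with respect to a kernel `K`. -/
noncomputable def MMD2 {α : Type*} [MeasurableSpace α] (K : α → α → ℝ) (μ ν : Measure α) : ℝ :=
  (∫ p, K p.1 p.2 ∂(μ.prod μ)) - 2 * (∫ p, K p.1 p.2 ∂(μ.prod ν))
    + (∫ p, K p.1 p.2 ∂(ν.prod ν))

/-- A symmetric positive definite kernel. -/
def IsPosDefKernel {α : Type*} (K : α → α → ℝ) : Prop :=
  (∀ x y, K x y = K y x) ∧
    ∀ (n : ℕ) (x : Fin n → α) (c : Fin n → ℝ),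
      0 ≤ ∑ j, ∑ k, c j * c k * K (x j) (x k)

section Aux

variable {X Y : Type*} [MeasurableSpace X] [MeasurableSpace Y]

lemma nnreal_smul_finite (c : ℝ≥0) (ν : Measure Y) [IsFiniteMeasure ν] :
    IsFiniteMeasure (c • ν) := by
  rw [ENNReal.smul_def]; exact ν.smul_finite ENNReal.coe_ne_top

lemma smul_prod_left' (c : ℝ≥0) (μ : Measure X) (ν : Measure Y) [SFinite ν] :
    (c • μ).prod ν = c • (μ.prod ν) := by
  ext s hs
  rw [Measure.prod_apply hs, Measure.smul_apply, Measure.prod_apply hs, ENNReal.smul_def,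
    ENNReal.smul_def, lintegral_smul_measure]

lemma smul_prod_right' (c : ℝ≥0) (μ : Measure X) (ν : Measure Y) [IsFiniteMeasure ν] :
    μ.prod (c • ν) = c • (μ.prod ν) := by
  haveI := nnreal_smul_finite c ν
  ext s hs
  rw [Measure.prod_apply hs, Measure.smul_apply, Measure.prod_apply hs]
  simp only [Measure.smul_apply, ENNReal.smul_def, smul_eq_mul]
  exact lintegral_const_mul _ (measurable_measure_prodMk_left hs)

end Aux

section Key

variable {T : Type*} [Fintype T] [DecidableEq T] [MeasurableSpace T]
  [MeasurableSingletonClass T]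
variable {X : Type*} [MeasurableSpace X]

lemma measurable_Kfact {Ky : X → X → ℝ} (hK : Measurable (Function.uncurry Ky)) :
    Measurable (fun p : (X × T) × (X × T) =>
      Ky p.1.1 p.2.1 * (if p.1.2 = p.2.2 then (1 : ℝ) else 0)) := by
  apply Measurable.mul
  · exact hK.comp ((measurable_fst.comp measurable_fst).prodMk
      (measurable_fst.comp measurable_snd))
  · exact Measurable.ite
      (measurableSet_eq_fun (measurable_snd.comp measurable_fst)
        (measurable_snd.comp measurable_snd)) measurable_const measurable_const

lemma key_integral (Ky : X → X → ℝ) (hKmeas : Measurable (Function.uncurry Ky))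
    (h : T → ℝ≥0) (μ ν : T → Measure X)
    [∀ t, IsProbabilityMeasure (μ t)] [∀ t, IsProbabilityMeasure (ν t)]
    (hint : ∀ t, Integrable (fun p : X × X => Ky p.1 p.2) ((μ t).prod (ν t))) :
    (∫ p, Ky p.1.1 p.2.1 * (if p.1.2 = p.2.2 then (1 : ℝ) else 0)
        ∂((∑ t, h t • (μ t).map (fun y => (y, t))).prod
          (∑ t, h t • (ν t).map (fun y => (y, t)))))
      = ∑ t, ((h t : ℝ)) ^ 2 * ∫ p, Ky p.1 p.2 ∂((μ t).prod (ν t)) := by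
  have hι : ∀ t : T, Measurable (fun y : X => (y, t)) := fun t => measurable_prodMk_right
  have hprod : (∑ t, h t • (μ t).map (fun y => (y, t))).prod
        (∑ t, h t • (ν t).map (fun y => (y, t)))
      = ∑ q : T × T, (h q.1 * h q.2) •
          (((μ q.1).prod (ν q.2)).map
            (Prod.map (fun y => (y, q.1)) (fun y => (y, q.2)))) := by
    haveI : ∀ t, IsFiniteMeasure (h t • (ν t).map (fun y => (y, t))) :=
      fun t => nnreal_smul_finite _ _
    rw [← Measure.sum_fintype (fun t => h t • (μ t).map (fun y => (y, t))),
      ← Measure.sum_fintype (fun t => h t • (ν t).map (fun y => (y, t))),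
      Measure.prod_sum, Measure.sum_fintype]
    refine Finset.sum_congr rfl fun q _ => ?_
    rw [smul_prod_left', smul_prod_right', smul_smul,
      Measure.map_prod_map _ _ (hι q.1) (hι q.2)]
  rw [hprod]
  have haes : ∀ q : T × T, AEStronglyMeasurable
      (fun p : (X × T) × (X × T) => Ky p.1.1 p.2.1 * (if p.1.2 = p.2.2 then (1 : ℝ) else 0))
      (((μ q.1).prod (ν q.2)).map (Prod.map (fun y => (y, q.1)) (fun y => (y, q.2)))) :=
    fun q => (measurable_Kfact hKmeas).aestronglyMeasurable
  have hmapm : ∀ q : T × T, AEMeasurable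
      (Prod.map (fun y : X => (y, q.1)) (fun y : X => (y, q.2))) ((μ q.1).prod (ν q.2)) :=
    fun q => ((hι q.1).prodMap (hι q.2)).aemeasurable
  have hintq : ∀ q : T × T, Integrable
      (fun p : (X × T) × (X × T) => Ky p.1.1 p.2.1 * (if p.1.2 = p.2.2 then (1 : ℝ) else 0))
      (((μ q.1).prod (ν q.2)).map (Prod.map (fun y => (y, q.1)) (fun y => (y, q.2)))) := by
    intro q
    rw [integrable_map_measure (haes q) (hmapm q)]
    by_cases hq : q.1 = q.2
    · simpa [Function.comp_def, Prod.map, hq] using hint q.2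
    · simpa [Function.comp_def, Prod.map, hq] using (integrable_const (0 : ℝ))
  rw [integral_finset_sum_measure (fun q _ => by
    rw [ENNReal.smul_def]
    exact (hintq q).smul_measure ENNReal.coe_ne_top)]
  have hval : ∀ q : T × T,
      (∫ p, Ky p.1.1 p.2.1 * (if p.1.2 = p.2.2 then (1 : ℝ) else 0)
          ∂((h q.1 * h q.2) • (((μ q.1).prod (ν q.2)).map
            (Prod.map (fun y => (y, q.1)) (fun y => (y, q.2))))))
        = if q.1 = q.2 then ((h q.1 : ℝ) * (h q.2 : ℝ)) *
            ∫ p, Ky p.1 p.2 ∂((μ q.1).prod (ν q.2)) else 0 := by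
    intro q
    rw [ENNReal.smul_def, integral_smul_measure, integral_map (hmapm q) (haes q)]
    by_cases hq : q.1 = q.2
    · simp [Prod.map, hq, smul_eq_mul]
    · simp [Prod.map, hq]
  simp only [hval]
  rw [Fintype.sum_prod_type]
  refine Finset.sum_congr rfl fun t _ => ?_
  rw [Finset.sum_ite_eq Finset.univ t
    (fun s => ((h t : ℝ) * (h s : ℝ)) * ∫ p, Ky p.1 p.2 ∂((μ t).prod (ν s)))]
  simp [pow_two]

end Key

/-- MMD decomposition for a time-factorized kernel: the squared MMD between joint
state–time distributions decomposes as a weighted sum of per-time squared MMDs. -/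
theorem mmd_factorized_kernel_decomposition
    {d : ℕ} {T : Type*} [Fintype T] [DecidableEq T] [MeasurableSpace T]
    [MeasurableSingletonClass T]
    (Ky : (Fin d → ℝ) → (Fin d → ℝ) → ℝ)
    (hKpd : IsPosDefKernel Ky)
    (hKmeas : Measurable (Function.uncurry Ky))
    (h : T → ℝ≥0) (hsum : ∑ t, h t = 1)
    (f g : T → Measure (Fin d → ℝ))
    [∀ t, IsProbabilityMeasure (f t)] [∀ t, IsProbabilityMeasure (g t)]
    (hff : ∀ t, Integrable (fun p => Ky p.1 p.2) ((f t).prod (f t)))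
    (hfg : ∀ t, Integrable (fun p => Ky p.1 p.2) ((f t).prod (g t)))
    (hgg : ∀ t, Integrable (fun p => Ky p.1 p.2) ((g t).prod (g t))) :
    MMD2 (fun p q : (Fin d → ℝ) × T => Ky p.1 q.1 * (if p.2 = q.2 then (1 : ℝ) else 0))
        (∑ t, h t • (f t).map (fun y => (y, t)))
        (∑ t, h t • (g t).map (fun y => (y, t)))
      = ∑ t, ((h t : ℝ)) ^ 2 * MMD2 Ky (f t) (g t) := by
  simp only [MMD2]
  rw [key_integral Ky hKmeas h f f hff, key_integral Ky hKmeas h f g hfg,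
    key_integral Ky hKmeas h g g hgg, Finset.mul_sum, ← Finset.sum_sub_distrib,
    ← Finset.sum_add_distrib]
  exact Finset.sum_congr rfl fun t _ => by ring
end

section
/- Let $w_1,\dots,w_I > 0$ be weights and $\hat{p}_1,\dots,\hat{p}_I$ be probability measures on $\mathbb{R}^d$ embedded in an RKHS with positive definite kernel $K_y$ (with finite kernel expectations). Then the minimizer over probability measures $f$ of $\sum_{i=1}^I w_i\, \mathrm{MMD}_{K_y}^2(f, \hat p_i)$ is the weighted mixture $f^* = (\sum_i w_i)^{-1} \sum_{i=1}^I w_i\, \hat p_i$; that is, the MMD barycenter of a finite family of distributions with positive weights is their normalized weighted mixture. -/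
open MeasureTheory NNReal

open Set
variable {γ : Type*} [MeasurableSpace γ]

lemma my_integrable_of_bound (m : Measure γ) [IsFiniteMeasure m]
    {g : γ → ℝ} (hg : AEStronglyMeasurable g m) (B : ℝ) (hb : ∀ x, |g x| ≤ B) :
    Integrable g m :=
  (integrable_const B).mono' hg (Filter.Eventually.of_forall fun x => by
    simpa [Real.norm_eq_abs] using hb x)

lemma my_pi_map_pair (ρ : Measure γ) [IsProbabilityMeasure ρ] {n : ℕ} {j k : Fin n}
    (hjk : j ≠ k) :
    (Measure.pi fun _ : Fin n => ρ).map (fun ω => (ω j, ω k)) = ρ.prod ρ := by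
  symm
  refine Measure.prod_eq fun s t hs ht => ?_
  rw [Measure.map_apply ((measurable_pi_apply j).prodMk (measurable_pi_apply k)) (hs.prod ht)]
  have hset : (fun ω : Fin n → γ => (ω j, ω k)) ⁻¹' (s ×ˢ t)
      = Set.pi Set.univ (fun i => if i = j then s else if i = k then t else Set.univ) := by
    ext ω
    simp only [Set.mem_preimage, Set.mem_prod, Set.mem_pi, Set.mem_univ, true_implies]
    constructor
    · rintro ⟨h1, h2⟩ i
      rcases eq_or_ne i j with rfl | hij
      · simpa using h1
      · rcases eq_or_ne i k with rfl | hik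
        · simpa [hjk.symm] using h2
        · simp [hij, hik]
    · intro h
      have h1 := h j; have h2 := h k
      simp only [if_pos rfl] at h1
      rw [if_neg hjk.symm, if_pos rfl] at h2
      exact ⟨h1, h2⟩
  rw [hset, Measure.pi_pi]
  have : ∀ i : Fin n, ρ (if i = j then s else if i = k then t else Set.univ)
      = (if i = j then ρ s else 1) * (if i = k then ρ t else 1) := by
    intro i
    rcases eq_or_ne i j with rfl | hij
    · simp [hjk]
    · rcases eq_or_ne i k with rfl | hik
      · simp [hij]
      · simp [hij, hik]
  rw [Finset.prod_congr rfl fun i _ => this i, Finset.prod_mul_distrib,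
    Finset.prod_ite_eq' Finset.univ j (fun _ => ρ s),
    Finset.prod_ite_eq' Finset.univ k (fun _ => ρ t)]
  simp

lemma my_pi_map_eval (ρ : Measure γ) [IsProbabilityMeasure ρ] {n : ℕ} (j : Fin n) :
    (Measure.pi fun _ : Fin n => ρ).map (fun ω => ω j) = ρ := by
  ext s hs
  rw [Measure.map_apply (measurable_pi_apply j) hs]
  have hset : (fun ω : Fin n → γ => ω j) ⁻¹' s
      = Set.pi Set.univ (fun i => if i = j then s else Set.univ) := by
    ext ω
    simp only [Set.mem_preimage, Set.mem_pi, Set.mem_univ, true_implies]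
    constructor
    · intro h1 i
      rcases eq_or_ne i j with rfl | hij
      · simpa using h1
      · simp [hij]
    · intro h
      have h1 := h j
      simpa using h1
  rw [hset, Measure.pi_pi]
  have : ∀ i : Fin n, ρ (if i = j then s else Set.univ) = (if i = j then ρ s else 1) := by
    intro i; rcases eq_or_ne i j with rfl | hij
    · simp
    · simp [hij]
  rw [Finset.prod_congr rfl fun i _ => this i,
    Finset.prod_ite_eq' Finset.univ j (fun _ => ρ s)]
  simp
section helpers
variable {γ δ : Type*} [MeasurableSpace γ] [MeasurableSpace δ]

lemma my_measK {K : γ → γ → ℝ} (hK : Measurable (Function.uncurry K))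
    {g h : δ → γ} (hg : Measurable g) (hh : Measurable h) :
    Measurable fun x => K (g x) (h x) := hK.comp (hg.prodMk hh)

lemma my_abs_integral_le (m : Measure δ) [IsProbabilityMeasure m]
    {g : δ → ℝ} (B : ℝ) (hb : ∀ x, |g x| ≤ B) : |∫ x, g x ∂m| ≤ B := by
  have := norm_integral_le_of_norm_le_const (μ := m) (f := g) (C := B)
    (Filter.Eventually.of_forall fun x => by simpa [Real.norm_eq_abs] using hb x)
  simpa [Real.norm_eq_abs] using this
end helpers

section nonneg
variable {γ : Type*} [MeasurableSpace γ]

lemma my_offdiag (ρ : Measure γ) [IsProbabilityMeasure ρ] {n : ℕ} {j k : Fin n}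
    (hjk : j ≠ k) {F : γ × γ → ℝ} (hF : Measurable F) :
    ∫ ω, F (ω j, ω k) ∂(Measure.pi fun _ : Fin n => ρ) = ∫ q, F q ∂(ρ.prod ρ) := by
  rw [← my_pi_map_pair ρ hjk,
    integral_map ((measurable_pi_apply j).prodMk (measurable_pi_apply k)).aemeasurable
      hF.aestronglyMeasurable]

lemma my_diag (ρ : Measure γ) [IsProbabilityMeasure ρ] {n : ℕ} (j : Fin n)
    {F : γ → ℝ} (hF : Measurable F) :
    ∫ ω, F (ω j) ∂(Measure.pi fun _ : Fin n => ρ) = ∫ z, F z ∂ρ := by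
  have h := integral_map (μ := Measure.pi fun _ : Fin n => ρ) (φ := fun ω => ω j)
    (measurable_pi_apply j).aemeasurable (f := F) hF.aestronglyMeasurable
  rw [my_pi_map_eval ρ j] at h
  exact h.symm

lemma my_mmd2_nonneg (K : γ → γ → ℝ)
    (hsym : ∀ x y, K x y = K y x)
    (hpd : ∀ (n : ℕ) (x : Fin n → γ) (c : Fin n → ℝ),
      0 ≤ ∑ j, ∑ k, c j * c k * K (x j) (x k))
    (hKmeas : Measurable (Function.uncurry K)) (B : ℝ) (hB : ∀ x y, |K x y| ≤ B)
    (μ ν : Measure γ) [IsProbabilityMeasure μ] [IsProbabilityMeasure ν] :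
    0 ≤ (∫ p, K p.1 p.2 ∂(μ.prod μ)) - 2 * (∫ p, K p.1 p.2 ∂(μ.prod ν))
      + (∫ p, K p.1 p.2 ∂(ν.prod ν)) := by
  set E11 : ℝ := ∫ p, K p.1 p.2 ∂(μ.prod μ) with hE11d
  set E12 : ℝ := ∫ p, K p.1 p.2 ∂(μ.prod ν) with hE12d
  set E22 : ℝ := ∫ p, K p.1 p.2 ∂(ν.prod ν) with hE22d
  set E21 : ℝ := ∫ p, K p.1 p.2 ∂(ν.prod μ) with hE21d
  set D1 : ℝ := ∫ z : γ × γ, K z.1 z.1 ∂(μ.prod ν) with hD1d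
  set D2 : ℝ := ∫ z : γ × γ, K z.2 z.2 ∂(μ.prod ν) with hD2d
  have hE21 : E21 = E12 := by
    have h := integral_prod_swap (μ := μ) (ν := ν) (fun z : γ × γ => K z.2 z.1)
    simp only [Prod.fst_swap, Prod.snd_swap] at h
    rw [hE21d, hE12d, h]
    exact integral_congr_ae (Filter.Eventually.of_forall fun z => hsym z.2 z.1)
  have hb11 : |E11| ≤ B := my_abs_integral_le _ B fun z => hB _ _
  have hb22 : |E22| ≤ B := my_abs_integral_le _ B fun z => hB _ _
  have hbD1 : |D1| ≤ B := my_abs_integral_le _ B fun z => hB _ _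
  have hbD2 : |D2| ≤ B := my_abs_integral_le _ B fun z => hB _ _
  have hmapf : (μ.prod ν).map Prod.fst = μ := by simp
  have hmaps : (μ.prod ν).map Prod.snd = ν := by simp
  have key : ∀ n : ℕ, 0 < n → -(4*B)/(n:ℝ) ≤ E11 + E22 - E12 - E21 := by
    intro n hn
    have hpt : ∀ ω : Fin n → γ × γ,
        0 ≤ (∑ j, ∑ k, K (ω j).1 (ω k).1) + (∑ j, ∑ k, K (ω j).2 (ω k).2)
          - (∑ j, ∑ k, K (ω j).1 (ω k).2) - (∑ j, ∑ k, K (ω j).2 (ω k).1) := by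
      intro ω
      have h := hpd (n + n) (Fin.append (fun j => (ω j).1) (fun j => (ω j).2))
          (Fin.append (fun _ => (1:ℝ)) (fun _ => (-1:ℝ)))
      simp only [Fin.sum_univ_add, Fin.append_left, Fin.append_right, one_mul, mul_one,
        neg_mul, mul_neg, neg_neg, Finset.sum_neg_distrib, Finset.sum_add_distrib] at h
      linarith
    have hint : ∀ (g h : γ × γ → γ), Measurable g → Measurable h →
        ∀ j k : Fin n, Integrable (fun ω => K (g (ω j)) (h (ω k)))
          (Measure.pi fun _ : Fin n => μ.prod ν) :=
      fun g h hg hh j k => my_integrable_of_bound _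
        ((my_measK hKmeas (hg.comp (measurable_pi_apply j))
          (hh.comp (measurable_pi_apply k))).aestronglyMeasurable) B fun ω => hB _ _
    have hsum : ∀ (g h : γ × γ → γ), Measurable g → Measurable h →
        ∫ ω, (∑ j, ∑ k, K (g (ω j)) (h (ω k))) ∂(Measure.pi fun _ : Fin n => μ.prod ν)
          = ∑ j, ∑ k, ∫ ω, K (g (ω j)) (h (ω k)) ∂(Measure.pi fun _ : Fin n => μ.prod ν) := by
      intro g h hg hh
      rw [integral_finset_sum _ fun j _ => integrable_finset_sum _ fun k _ => hint g h hg hh j k]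
      exact Finset.sum_congr rfl fun j _ => integral_finset_sum _ fun k _ => hint g h hg hh j k
    have hterm : ∀ (g h : γ × γ → γ), Measurable g → Measurable h →
        ∀ j k : Fin n, j ≠ k →
        ∫ ω, K (g (ω j)) (h (ω k)) ∂(Measure.pi fun _ : Fin n => μ.prod ν)
          = ∫ z, K z.1 z.2 ∂(((μ.prod ν).map g).prod ((μ.prod ν).map h)) := by
      intro g h hg hh j k hjk
      have h1 := my_offdiag (μ.prod ν) hjk (F := fun q => K (g q.1) (h q.2))
        (my_measK hKmeas (hg.comp measurable_fst) (hh.comp measurable_snd))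
      have h2 : ∫ z, K z.1 z.2 ∂(((μ.prod ν).map g).prod ((μ.prod ν).map h))
          = ∫ q, K (g q.1) (h q.2) ∂((μ.prod ν).prod (μ.prod ν)) := by
        rw [Measure.map_prod_map _ _ hg hh,
          integral_map (hg.prodMap hh).aemeasurable
            (my_measK hKmeas measurable_fst measurable_snd).aestronglyMeasurable]
        rfl
      rw [h2]
      exact h1
    have hdterm : ∀ (g h : γ × γ → γ), Measurable g → Measurable h → ∀ j : Fin n,
        ∫ ω, K (g (ω j)) (h (ω j)) ∂(Measure.pi fun _ : Fin n => μ.prod ν)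
          = ∫ z, K (g z) (h z) ∂(μ.prod ν) :=
      fun g h hg hh j => my_diag (μ.prod ν) j (F := fun z => K (g z) (h z))
        (my_measK hKmeas hg hh)
    have hcount : ∀ (F : Fin n → Fin n → ℝ) (a b : ℝ), (∀ j, F j j = a) →
        (∀ j k, j ≠ k → F j k = b) →
        ∑ j, ∑ k, F j k = (n:ℝ) * ((a - b) + n * b) := by
      intro F a b hd ho
      have inner : ∀ j, ∑ k, F j k = (a - b) + n * b := by
        intro j
        have hFk : ∀ k, F j k = (if j = k then a - b else 0) + b := by
          intro k
          rcases eq_or_ne j k with rfl | h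
          · simp [hd]
          · simp [h, ho j k h]
        rw [Finset.sum_congr rfl fun k _ => hFk k, Finset.sum_add_distrib,
          Finset.sum_ite_eq, Finset.sum_const, Finset.card_univ, Fintype.card_fin]
        simp [nsmul_eq_mul]
      rw [Finset.sum_congr rfl fun j _ => inner j, Finset.sum_const, Finset.card_univ,
        Fintype.card_fin, nsmul_eq_mul]
    have S11 : ∑ j, ∑ k, ∫ ω, K ((ω j).1) ((ω k).1) ∂(Measure.pi fun _ : Fin n => μ.prod ν)
        = (n:ℝ) * ((D1 - E11) + n * E11) :=
      hcount _ D1 E11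
        (fun j => by rw [hdterm Prod.fst Prod.fst measurable_fst measurable_fst j])
        (fun j k hjk => by
          rw [hterm Prod.fst Prod.fst measurable_fst measurable_fst j k hjk, hmapf])
    have S22 : ∑ j, ∑ k, ∫ ω, K ((ω j).2) ((ω k).2) ∂(Measure.pi fun _ : Fin n => μ.prod ν)
        = (n:ℝ) * ((D2 - E22) + n * E22) :=
      hcount _ D2 E22
        (fun j => by rw [hdterm Prod.snd Prod.snd measurable_snd measurable_snd j])
        (fun j k hjk => by
          rw [hterm Prod.snd Prod.snd measurable_snd measurable_snd j k hjk, hmaps])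
    have S12 : ∑ j, ∑ k, ∫ ω, K ((ω j).1) ((ω k).2) ∂(Measure.pi fun _ : Fin n => μ.prod ν)
        = (n:ℝ) * ((E12 - E12) + n * E12) :=
      hcount _ E12 E12
        (fun j => by rw [hdterm Prod.fst Prod.snd measurable_fst measurable_snd j])
        (fun j k hjk => by
          rw [hterm Prod.fst Prod.snd measurable_fst measurable_snd j k hjk, hmapf, hmaps])
    have S21 : ∑ j, ∑ k, ∫ ω, K ((ω j).2) ((ω k).1) ∂(Measure.pi fun _ : Fin n => μ.prod ν)
        = (n:ℝ) * ((E12 - E21) + n * E21) :=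
      hcount _ E12 E21
        (fun j => by
          rw [hdterm Prod.snd Prod.fst measurable_snd measurable_fst j, hE12d]
          exact integral_congr_ae (Filter.Eventually.of_forall fun z => hsym z.2 z.1))
        (fun j k hjk => by
          rw [hterm Prod.snd Prod.fst measurable_snd measurable_fst j k hjk, hmaps, hmapf])
    have hI11 := integrable_finset_sum (μ := Measure.pi fun _ : Fin n => μ.prod ν)
      Finset.univ fun j (_ : j ∈ Finset.univ) => integrable_finset_sum Finset.univ
        fun k _ => hint Prod.fst Prod.fst measurable_fst measurable_fst j k
    have hI22 := integrable_finset_sum (μ := Measure.pi fun _ : Fin n => μ.prod ν)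
      Finset.univ fun j (_ : j ∈ Finset.univ) => integrable_finset_sum Finset.univ
        fun k _ => hint Prod.snd Prod.snd measurable_snd measurable_snd j k
    have hI12 := integrable_finset_sum (μ := Measure.pi fun _ : Fin n => μ.prod ν)
      Finset.univ fun j (_ : j ∈ Finset.univ) => integrable_finset_sum Finset.univ
        fun k _ => hint Prod.fst Prod.snd measurable_fst measurable_snd j k
    have hI21 := integrable_finset_sum (μ := Measure.pi fun _ : Fin n => μ.prod ν)
      Finset.univ fun j (_ : j ∈ Finset.univ) => integrable_finset_sum Finset.univ
        fun k _ => hint Prod.snd Prod.fst measurable_snd measurable_fst j k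
    have h0 : 0 ≤ ∫ ω, ((∑ j, ∑ k, K ((ω j).1) ((ω k).1)) + (∑ j, ∑ k, K ((ω j).2) ((ω k).2))
        - (∑ j, ∑ k, K ((ω j).1) ((ω k).2)) - (∑ j, ∑ k, K ((ω j).2) ((ω k).1)))
        ∂(Measure.pi fun _ : Fin n => μ.prod ν) :=
      integral_nonneg hpt
    have hIc1 : Integrable (fun ω => (∑ j, ∑ k, K ((ω j).1) ((ω k).1))
        + (∑ j, ∑ k, K ((ω j).2) ((ω k).2))) (Measure.pi fun _ : Fin n => μ.prod ν) :=
      hI11.add hI22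
    have hIc2 : Integrable (fun ω => (∑ j, ∑ k, K ((ω j).1) ((ω k).1))
        + (∑ j, ∑ k, K ((ω j).2) ((ω k).2)) - (∑ j, ∑ k, K ((ω j).1) ((ω k).2)))
        (Measure.pi fun _ : Fin n => μ.prod ν) := hIc1.sub hI12
    rw [integral_sub hIc2 hI21,
      integral_sub hIc1 hI12,
      integral_add hI11 hI22,
      hsum Prod.fst Prod.fst measurable_fst measurable_fst,
      hsum Prod.snd Prod.snd measurable_snd measurable_snd,
      hsum Prod.fst Prod.snd measurable_fst measurable_snd,
      hsum Prod.snd Prod.fst measurable_snd measurable_fst,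
      S11, S22, S12, S21] at h0
    have hn' : (0:ℝ) < n := by exact_mod_cast hn
    have h0' : 0 ≤ (n:ℝ) * (((D1 - E11) + (D2 - E22))
        + (n:ℝ) * (E11 + E22 - E12 - E21)) := by nlinarith [h0]
    have h2 : 0 ≤ ((D1 - E11) + (D2 - E22)) + (n:ℝ) * (E11 + E22 - E12 - E21) := by
      rcases le_or_gt 0 (((D1 - E11) + (D2 - E22)) + (n:ℝ) * (E11 + E22 - E12 - E21))
        with h | h
      · exact h
      · exfalso
        have := mul_neg_of_pos_of_neg hn' h
        linarith
    have h4 : -(4*B) ≤ (n:ℝ) * (E11 + E22 - E12 - E21) := by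
      have := abs_le.mp hb11
      have := abs_le.mp hb22
      have := abs_le.mp hbD1
      have := abs_le.mp hbD2
      linarith
    rw [div_le_iff₀ hn']
    linarith [h4]
  have hlim : Filter.Tendsto (fun n : ℕ => -(4*B)/(n:ℝ)) Filter.atTop (nhds 0) :=
    tendsto_const_div_atTop_nhds_zero_nat _
  have hM : (0:ℝ) ≤ E11 + E22 - E12 - E21 :=
    le_of_tendsto hlim (Filter.eventually_atTop.2 ⟨1, fun n hn => key n (by omega)⟩)
  rw [hE21] at hM
  linarith
end nonneg

section main
variable {α : Type*} [MeasurableSpace α]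

lemma my_prod_mix {I : ℕ} (w : Fin I → ℝ≥0) (hW : (∑ j, w j) ≠ 0)
    (p : Fin I → Measure α) [∀ i, IsProbabilityMeasure (p i)]
    (x : Measure α) [IsProbabilityMeasure x] :
    x.prod ((∑ j, w j)⁻¹ • ∑ j, w j • p j)
      = (∑ j, w j)⁻¹ • ∑ j, w j • x.prod (p j) := by
  haveI : IsProbabilityMeasure ((∑ j, w j)⁻¹ • ∑ j, w j • p j : Measure α) := by
    constructor
    simp only [Measure.smul_apply, Measure.finset_sum_apply, measure_univ, ENNReal.smul_def, smul_eq_mul,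
      mul_one, ← ENNReal.coe_finset_sum, ← ENNReal.coe_mul, inv_mul_cancel₀ hW,
      ENNReal.coe_one]
  refine Measure.prod_eq fun s t hs ht => ?_
  simp only [Measure.smul_apply, Measure.finset_sum_apply, Measure.prod_prod,
    ENNReal.smul_def, smul_eq_mul, Finset.mul_sum]
  refine Finset.sum_congr rfl fun j _ => ?_
  ring
end main

/-- The MMD barycenter of a finite family of probability measures with positive weights
is their normalized weighted mixture: the mixture minimizes the weighted sum of squared
MMDs to the given measures over all probability measures. -/
theorem mmd_barycenter_is_weighted_mixture
    {d I : ℕ} (hI : 0 < I)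
    (Ky : (Fin d → ℝ) → (Fin d → ℝ) → ℝ)
    (hKpd : IsPosDefKernel Ky)
    (hKmeas : Measurable (Function.uncurry Ky))
    (B : ℝ) (hB : ∀ x y, |Ky x y| ≤ B)
    (w : Fin I → ℝ≥0) (hw : ∀ i, 0 < w i)
    (p : Fin I → Measure (Fin d → ℝ)) [∀ i, IsProbabilityMeasure (p i)]
    (f : Measure (Fin d → ℝ)) [IsProbabilityMeasure f] :
    ∑ i, (w i : ℝ) * MMD2 Ky ((∑ j, w j)⁻¹ • ∑ j, w j • p j) (p i)
      ≤ ∑ i, (w i : ℝ) * MMD2 Ky f (p i) := by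
  haveI : Nonempty (Fin I) := ⟨⟨0, hI⟩⟩
  have hW0 : 0 < ∑ j, w j := Finset.sum_pos (fun i _ => hw i) Finset.univ_nonempty
  have hW : (∑ j, w j) ≠ 0 := hW0.ne'
  set m : Measure (Fin d → ℝ) := (∑ j, w j)⁻¹ • ∑ j, w j • p j with hm
  haveI hPm : IsProbabilityMeasure m := by
    constructor
    rw [hm]
    simp only [Measure.smul_apply, Measure.finset_sum_apply, measure_univ, ENNReal.smul_def,
      smul_eq_mul, mul_one, ← ENNReal.coe_finset_sum, ← ENNReal.coe_mul, inv_mul_cancel₀ hW,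
      ENNReal.coe_one]
  have hWr : (0:ℝ) < ((∑ j, w j : ℝ≥0) : ℝ) := hW0
  -- linearity of the kernel double integral in the second argument
  have hlin : ∀ (x : Measure (Fin d → ℝ)), IsProbabilityMeasure x →
      ∫ q, Ky q.1 q.2 ∂(x.prod m)
        = (((∑ j, w j : ℝ≥0) : ℝ))⁻¹ * ∑ j, (w j : ℝ) * ∫ q, Ky q.1 q.2 ∂(x.prod (p j)) := by
    intro x hx
    rw [hm, my_prod_mix w hW p x, integral_smul_nnreal_measure,
      integral_finset_sum_measure (fun j _ => ?_)]
    · rw [NNReal.smul_def, NNReal.coe_inv]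
      refine congrArg _ (Finset.sum_congr rfl fun j _ => ?_)
      rw [integral_smul_nnreal_measure, NNReal.smul_def, smul_eq_mul]
    · exact my_integrable_of_bound _
        (my_measK hKmeas measurable_fst measurable_snd).aestronglyMeasurable B fun z => hB _ _
  have hsum_expand : ∀ (b c : Fin I → ℝ) (A : ℝ),
      ∑ i, (w i : ℝ) * (A - 2 * b i + c i)
        = (∑ i, (w i : ℝ)) * A - 2 * ∑ i, (w i : ℝ) * b i + ∑ i, (w i : ℝ) * c i := by
    intro b c A
    have h : ∀ i : Fin I, (w i : ℝ) * (A - 2 * b i + c i)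
        = (w i : ℝ) * A - 2 * ((w i : ℝ) * b i) + (w i : ℝ) * c i := fun i => by ring
    rw [Finset.sum_congr rfl fun i _ => h i, Finset.sum_add_distrib, Finset.sum_sub_distrib,
      ← Finset.sum_mul, ← Finset.mul_sum]
  have hWcast : (∑ i, (w i : ℝ)) = ((∑ j, w j : ℝ≥0) : ℝ) := by
    rw [NNReal.coe_sum]
  have hmm := hlin m hPm
  have hfm := hlin f inferInstance
  have hnn : 0 ≤ (∫ q, Ky q.1 q.2 ∂(f.prod f)) - 2 * (∫ q, Ky q.1 q.2 ∂(f.prod m))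
      + (∫ q, Ky q.1 q.2 ∂(m.prod m)) :=
    my_mmd2_nonneg Ky hKpd.1 hKpd.2 hKmeas B hB f m
  simp only [MMD2]
  rw [hsum_expand (fun i => ∫ q, Ky q.1 q.2 ∂(m.prod (p i)))
      (fun i => ∫ q, Ky q.1 q.2 ∂((p i).prod (p i))) _,
    hsum_expand (fun i => ∫ q, Ky q.1 q.2 ∂(f.prod (p i)))
      (fun i => ∫ q, Ky q.1 q.2 ∂((p i).prod (p i))) _,
    hWcast]
  set Wr : ℝ := ((∑ j, w j : ℝ≥0) : ℝ)
  set Emm : ℝ := ∫ q, Ky q.1 q.2 ∂(m.prod m)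
  set Eff : ℝ := ∫ q, Ky q.1 q.2 ∂(f.prod f)
  set Efm : ℝ := ∫ q, Ky q.1 q.2 ∂(f.prod m)
  set Sm : ℝ := ∑ j, (w j : ℝ) * ∫ q, Ky q.1 q.2 ∂(m.prod (p j))
  set Sf : ℝ := ∑ j, (w j : ℝ) * ∫ q, Ky q.1 q.2 ∂(f.prod (p j))
  have hSm : Sm = Wr * Emm := by
    rw [hmm]; field_simp
  have hSf : Sf = Wr * Efm := by
    rw [hfm]; field_simp
  rw [hSm, hSf]
  nlinarith [hnn, hWr]
end

section
/- If $K_y$ is a bounded, measurable, positive definite, characteristic kernel on $\mathbb{R}^d$, and for two joint distributions $f(y,t) = f(y\mid t)h(t)$ and $g(y,t) = g(y\mid t)h(t)$ over $\mathbb{R}^d \times \mathcal{T}$ (with $\mathcal{T}$ finite and $h(t) > 0$ for all $t$) the factorized-kernel MMD satisfies $\mathrm{MMD}_K^2(f,g) = 0$, then $f(\cdot\mid t) = g(\cdot\mid t)$ for every $t \in \mathcal{T}$, and hence $f = g$ as joint distributions. -/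
open MeasureTheory NNReal

/-- Product of finite sums of scaled measures expands bilinearly. -/
lemma prod_finset_sum_smul {α β ι : Type*} [MeasurableSpace α] [MeasurableSpace β] [Fintype ι]
    (c c' : ι → ℝ≥0) (m : ι → Measure α) (m' : ι → Measure β)
    [∀ i, IsFiniteMeasure (m i)] [∀ i, IsFiniteMeasure (m' i)] :
    (∑ i, c i • m i).prod (∑ j, c' j • m' j)
      = ∑ i, ∑ j, (c i * c' j) • (m i).prod (m' j) := by
  ext s hs
  have hmeas : ∀ j, Measurable (fun x : α => (m' j) (Prod.mk x ⁻¹' s)) :=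
    fun j => measurable_measure_prodMk_left hs
  rw [Measure.prod_apply hs]
  simp only [Measure.finset_sum_apply, Measure.smul_apply, smul_eq_mul, ENNReal.smul_def]
  rw [lintegral_finset_sum_measure]
  refine Finset.sum_congr rfl fun i _ => ?_
  rw [lintegral_smul_measure]
  rw [lintegral_finset_sum _ (fun j _ => (hmeas j).const_mul _)]
  rw [smul_eq_mul, Finset.mul_sum]
  refine Finset.sum_congr rfl fun j _ => ?_
  rw [lintegral_const_mul _ (hmeas j), Measure.prod_apply hs]
  push_cast
  ring

/-- The joint law of two distinct coordinates of a product measure is the product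
of the marginals. -/
lemma map_pi_pair {ι α : Type*} [Fintype ι] [DecidableEq ι] [MeasurableSpace α]
    (μs : ι → Measure α) [∀ i, IsProbabilityMeasure (μs i)] {i j : ι} (hij : i ≠ j) :
    (Measure.pi μs).map (fun ω => (ω i, ω j)) = (μs i).prod (μs j) := by
  refine (Measure.prod_eq fun s t hs ht => ?_).symm
  rw [Measure.map_apply ((measurable_pi_apply i).prodMk (measurable_pi_apply j)) (hs.prod ht)]
  have hset : (fun ω : ι → α => (ω i, ω j)) ⁻¹' (s ×ˢ t)
      = Set.pi Set.univ (fun k => if k = i then s else if k = j then t else Set.univ) := by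
    ext ω
    simp only [Set.mem_preimage, Set.mem_prod, Set.mem_pi, Set.mem_univ, forall_true_left]
    constructor
    · rintro ⟨h1, h2⟩ k
      by_cases hk : k = i
      · subst hk; simp [if_pos rfl, h1]
      · by_cases hk' : k = j
        · subst hk'; simp [if_neg hk, h2]
        · simp [if_neg hk, if_neg hk']
    · intro hk
      have h1 := hk i
      have h2 := hk j
      rw [if_pos rfl] at h1
      rw [if_neg (Ne.symm hij)] at h2
      rw [if_pos rfl] at h2
      exact ⟨h1, h2⟩
  rw [hset, Measure.pi_pi]
  have : ∀ k, (μs k) (if k = i then s else if k = j then t else Set.univ)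
      = if k = i then (μs i) s else if k = j then (μs j) t else 1 := by
    intro k
    by_cases hk : k = i
    · subst hk; simp
    · by_cases hk' : k = j
      · subst hk'; simp [hk]
      · simp [hk, hk']
  simp only [this]
  rw [← Finset.mul_prod_erase Finset.univ _ (Finset.mem_univ i)]
  rw [if_pos rfl]
  rw [← Finset.mul_prod_erase (Finset.univ.erase i) _
    (Finset.mem_erase.2 ⟨Ne.symm hij, Finset.mem_univ j⟩)]
  rw [if_neg (Ne.symm hij), if_pos rfl]
  rw [Finset.prod_eq_one, mul_one]
  intro k hk
  simp only [Finset.mem_erase] at hk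
  rw [if_neg hk.2.1, if_neg hk.1]

lemma integrable_of_bound {α : Type*} [MeasurableSpace α] {μ : Measure α} [IsFiniteMeasure μ]
    {f : α → ℝ} (hf : AEStronglyMeasurable f μ) (C : ℝ) (h : ∀ x, |f x| ≤ C) :
    Integrable f μ :=
  (integrable_const C).mono' hf (Filter.Eventually.of_forall fun x => by
    simpa [Real.norm_eq_abs] using h x)

lemma abs_integral_le {α : Type*} [MeasurableSpace α] (μ : Measure α) [IsProbabilityMeasure μ]
    (f : α → ℝ) (C : ℝ) (h : ∀ x, |f x| ≤ C) : |∫ x, f x ∂μ| ≤ C := by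
  have := norm_integral_le_of_norm_le_const (μ := μ) (f := f) (C := C)
    (Filter.Eventually.of_forall fun x => by simpa [Real.norm_eq_abs] using h x)
  simpa [Real.norm_eq_abs] using this

lemma nnsmul_measure_eq {α : Type*} [MeasurableSpace α] (c : ℝ≥0) (μ : Measure α) :
    c • μ = (c : ENNReal) • μ := by
  ext s _; simp only [Measure.smul_apply, ENNReal.smul_def, smul_eq_mul]

/-- A bounded measurable positive definite kernel has nonnegative MMD² between any two
probability measures (Monte-Carlo approximation argument). -/
lemma mmd2_nonneg {α : Type*} [MeasurableSpace α] (K : α → α → ℝ)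
    (hpd : IsPosDefKernel K) (hm : Measurable (Function.uncurry K))
    (B : ℝ) (hB : ∀ x y, |K x y| ≤ B)
    (μ ν : Measure α) [IsProbabilityMeasure μ] [IsProbabilityMeasure ν] :
    0 ≤ MMD2 K μ ν := by
  set M := MMD2 K μ ν with hM
  -- symmetry of the cross term
  have hKm : ∀ (a b : Measure α), Measurable fun p : α × α => K p.1 p.2 := fun _ _ => hm
  have hTsymm : (∫ p, K p.1 p.2 ∂(ν.prod μ)) = ∫ p, K p.1 p.2 ∂(μ.prod ν) := by
    rw [← MeasureTheory.integral_prod_swap]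
    simp only [Prod.fst_swap, Prod.snd_swap]
    exact integral_congr_ae (Filter.Eventually.of_forall fun p => hpd.1 _ _)
  have key : ∀ n : ℕ, 1 ≤ n → -(4 * B) / n ≤ M := by
    intro n hn
    have hcard : (Fintype.card (Fin n ⊕ Fin n) : ℝ) = 2 * n := by
      simp [Fintype.card_sum, Fintype.card_fin]; ring
    set μs : (Fin n ⊕ Fin n) → Measure α := Sum.elim (fun _ => μ) (fun _ => ν) with hμs
    haveI : ∀ i, IsProbabilityMeasure (μs i) := by
      rintro (a | b) <;> simp [hμs] <;> infer_instance
    set P := Measure.pi μs with hP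
    haveI : IsProbabilityMeasure P := inferInstance
    set c : (Fin n ⊕ Fin n) → ℝ := Sum.elim (fun _ => 1) (fun _ => -1) with hc
    have hc1 : ∀ i : Fin n ⊕ Fin n, c i * c i = 1 := by rintro (a | b) <;> simp [hc]
    have hcabs : ∀ i, |c i| = 1 := by rintro (a | b) <;> simp [hc]
    -- pointwise positivity
    have hpt : ∀ ω : (Fin n ⊕ Fin n) → α, 0 ≤ ∑ i : Fin n ⊕ Fin n, ∑ j : Fin n ⊕ Fin n, c i * c j * K (ω i) (ω j) := by
      intro ω
      have h0 := hpd.2 (Fintype.card (Fin n ⊕ Fin n)) (fun k => ω ((Fintype.equivFin (Fin n ⊕ Fin n)).symm k))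
        (fun k => c ((Fintype.equivFin (Fin n ⊕ Fin n)).symm k))
      have heq : (∑ j, ∑ k, c ((Fintype.equivFin (Fin n ⊕ Fin n)).symm j) * c ((Fintype.equivFin (Fin n ⊕ Fin n)).symm k) *
          K (ω ((Fintype.equivFin (Fin n ⊕ Fin n)).symm j)) (ω ((Fintype.equivFin (Fin n ⊕ Fin n)).symm k)))
          = ∑ i : Fin n ⊕ Fin n, ∑ j : Fin n ⊕ Fin n, c i * c j * K (ω i) (ω j) :=
        Fintype.sum_equiv (Fintype.equivFin (Fin n ⊕ Fin n)).symm _ _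
          (fun j => Fintype.sum_equiv (Fintype.equivFin (Fin n ⊕ Fin n)).symm _ _ fun k => rfl)
      rw [heq] at h0
      exact h0
    -- measurability and integrability of each term
    have hmeas : ∀ i j : Fin n ⊕ Fin n, Measurable fun ω : (Fin n ⊕ Fin n) → α => K (ω i) (ω j) := fun i j =>
      Measurable.comp (f := fun ω : (Fin n ⊕ Fin n) → α => (ω i, ω j)) hm
        ((measurable_pi_apply i).prodMk (measurable_pi_apply j))
    have hint : ∀ i j : Fin n ⊕ Fin n, Integrable (fun ω : (Fin n ⊕ Fin n) → α => K (ω i) (ω j)) P := fun i j =>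
      integrable_of_bound (hmeas i j).aestronglyMeasurable B (fun ω => hB _ _)
    set I : (Fin n ⊕ Fin n) → (Fin n ⊕ Fin n) → ℝ := fun i j => ∫ ω, K (ω i) (ω j) ∂P with hI
    set Tm : (Fin n ⊕ Fin n) → (Fin n ⊕ Fin n) → ℝ := fun i j => ∫ p, K p.1 p.2 ∂((μs i).prod (μs j)) with hTm
    have hIT : ∀ i j : Fin n ⊕ Fin n, i ≠ j → I i j = Tm i j := by
      intro i j hij
      rw [hI]
      simp only
      rw [hTm]
      simp only
      rw [← map_pi_pair μs hij,
        integral_map ((measurable_pi_apply i).prodMk (measurable_pi_apply j)).aemeasurable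
          hm.aestronglyMeasurable]
    -- integral of the double sum
    have h0 : (0:ℝ) ≤ ∑ i : Fin n ⊕ Fin n, ∑ j : Fin n ⊕ Fin n, c i * c j * I i j := by
      have hnn : (0:ℝ) ≤ ∫ ω, ∑ i : Fin n ⊕ Fin n, ∑ j : Fin n ⊕ Fin n, c i * c j * K (ω i) (ω j) ∂P :=
        integral_nonneg hpt
      rw [integral_finset_sum _ (fun i _ => integrable_finset_sum _
        (fun j _ => ((hint i j).const_mul _)))] at hnn
      calc (0:ℝ) ≤ _ := hnn
        _ = ∑ i : Fin n ⊕ Fin n, ∑ j : Fin n ⊕ Fin n, c i * c j * I i j := by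
          refine Finset.sum_congr rfl fun i _ => ?_
          rw [integral_finset_sum _ (fun j _ => ((hint i j).const_mul _))]
          exact Finset.sum_congr rfl fun j _ => by
            simpa [smul_eq_mul] using
              integral_smul (μ := P) (c i * c j) (fun ω : (Fin n ⊕ Fin n) → α => K (ω i) (ω j))
    -- split into off-diagonal (= Tm) and diagonal correction
    have hsplit : (∑ i : Fin n ⊕ Fin n, ∑ j : Fin n ⊕ Fin n, c i * c j * I i j)
        = (∑ i : Fin n ⊕ Fin n, ∑ j : Fin n ⊕ Fin n, c i * c j * Tm i j) + ∑ i : Fin n ⊕ Fin n, (I i i - Tm i i) := by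
      rw [← Finset.sum_add_distrib]
      refine Finset.sum_congr rfl fun i _ => ?_
      have : ∀ j : Fin n ⊕ Fin n, c i * c j * I i j = c i * c j * Tm i j
          + (if j = i then (I i i - Tm i i) else 0) := by
        intro j
        by_cases hji : j = i
        · subst hji; rw [if_pos rfl, hc1]; ring
        · rw [if_neg hji, hIT i j (fun hh => hji hh.symm), add_zero]
      rw [Finset.sum_congr rfl fun j _ => this j, Finset.sum_add_distrib,
        Finset.sum_ite_eq' Finset.univ i (fun _ => I i i - Tm i i), if_pos (Finset.mem_univ i)]
    -- bound on correction
    have hcorr : ∑ i : Fin n ⊕ Fin n, (I i i - Tm i i) ≤ (2 * n) * (2 * B) := by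
      have : ∀ i : Fin n ⊕ Fin n, I i i - Tm i i ≤ 2 * B := by
        intro i
        have h1 : |I i i| ≤ B := abs_integral_le P _ B (fun ω => hB _ _)
        have h2 : |Tm i i| ≤ B := abs_integral_le _ _ B (fun p => hB _ _)
        have := abs_le.1 h1
        have := abs_le.1 h2
        nlinarith [abs_le.1 h1, abs_le.1 h2]
      calc ∑ i : Fin n ⊕ Fin n, (I i i - Tm i i) ≤ ∑ _i : Fin n ⊕ Fin n, 2 * B := Finset.sum_le_sum fun i _ => this i
        _ = (2 * n) * (2 * B) := by
          rw [Finset.sum_const, Finset.card_univ, nsmul_eq_mul, ← hcard]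
    -- compute the main double sum
    have hmain : (∑ i : Fin n ⊕ Fin n, ∑ j : Fin n ⊕ Fin n, c i * c j * Tm i j) = (n : ℝ)^2 * M := by
      simp only [hTm, hc, hμs, hM, MMD2, Fintype.sum_sum_type, Sum.elim_inl, Sum.elim_inr,
        Finset.sum_const, Finset.card_univ, Fintype.card_fin, nsmul_eq_mul, one_mul, mul_one,
        mul_neg, neg_mul, neg_neg, Finset.sum_add_distrib, Finset.sum_neg_distrib]
      rw [hTsymm]
      ring
    have hn0 : (0:ℝ) < n := by exact_mod_cast hn
    rw [div_le_iff₀ hn0]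
    rw [hsplit, hmain] at h0
    nlinarith [h0, hcorr, hn0, sq_nonneg ((n:ℝ))]
  have tends : Filter.Tendsto (fun n : ℕ => -(4 * B) / n) Filter.atTop (nhds 0) :=
    tendsto_const_div_atTop_nhds_zero_nat _
  exact le_of_tendsto tends (Filter.eventually_atTop.2 ⟨1, key⟩)


/-- If the state kernel is bounded, measurable, positive definite and characteristic, and
the factorized-kernel MMD between two joint state–time distributions (with common, fully
supported time marginal) vanishes, then the conditionals agree at every time, and hence
the joints agree. -/
theorem characteristic_kernel_mmd_zero_implies_equal
    {d : ℕ} {T : Type*} [Fintype T] [DecidableEq T] [MeasurableSpace T]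
    [MeasurableSingletonClass T]
    (Ky : (Fin d → ℝ) → (Fin d → ℝ) → ℝ)
    (hKpd : IsPosDefKernel Ky)
    (hKmeas : Measurable (Function.uncurry Ky))
    (B : ℝ) (hB : ∀ x y, |Ky x y| ≤ B)
    (hchar : ∀ μ ν : Measure (Fin d → ℝ), IsProbabilityMeasure μ →
      IsProbabilityMeasure ν → MMD2 Ky μ ν = 0 → μ = ν)
    (h : T → ℝ≥0) (hpos : ∀ t, 0 < h t) (hsum : ∑ t, h t = 1)
    (f g : T → Measure (Fin d → ℝ))
    [∀ t, IsProbabilityMeasure (f t)] [∀ t, IsProbabilityMeasure (g t)]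
    (hzero : MMD2 (fun p q : (Fin d → ℝ) × T => Ky p.1 q.1 * (if p.2 = q.2 then (1 : ℝ) else 0))
      (∑ t, h t • (f t).map (fun y => (y, t)))
      (∑ t, h t • (g t).map (fun y => (y, t))) = 0) :
    (∀ t, f t = g t) ∧
      (∑ t, h t • (f t).map (fun y => (y, t)))
        = (∑ t, h t • (g t).map (fun y => (y, t))) := by
  classical
  set Kf : (Fin d → ℝ) × T → (Fin d → ℝ) × T → ℝ :=
    fun p q => Ky p.1 q.1 * (if p.2 = q.2 then (1 : ℝ) else 0) with hKf
  -- basic facts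
  have hB0 : 0 ≤ B := le_trans (abs_nonneg _) (hB (fun _ => 0) (fun _ => 0))
  have hemeas : ∀ t : T, Measurable (fun y : Fin d → ℝ => (y, t)) :=
    fun t => measurable_id.prodMk measurable_const
  haveI : ∀ t, IsProbabilityMeasure ((f t).map (fun y => (y, t))) :=
    fun t => Measure.isProbabilityMeasure_map (hemeas t).aemeasurable
  haveI : ∀ t, IsProbabilityMeasure ((g t).map (fun y => (y, t))) :=
    fun t => Measure.isProbabilityMeasure_map (hemeas t).aemeasurable
  -- measurability of the factorized kernel
  have hKfmeas : Measurable (Function.uncurry Kf) := by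
    have h1 : Measurable (fun z : ((Fin d → ℝ) × T) × ((Fin d → ℝ) × T) => Ky z.1.1 z.2.1) :=
      Measurable.comp (f := fun z : ((Fin d → ℝ) × T) × ((Fin d → ℝ) × T) => (z.1.1, z.2.1)) hKmeas
        ((measurable_fst.fst).prodMk (measurable_snd.fst))
    have h2 : Measurable (fun z : ((Fin d → ℝ) × T) × ((Fin d → ℝ) × T) =>
        (if z.1.2 = z.2.2 then (1 : ℝ) else 0)) := by
      refine Measurable.ite ?_ measurable_const measurable_const
      exact measurableSet_eq_fun (measurable_fst.snd) (measurable_snd.snd)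
    exact h1.mul h2
  have hKfmeas' : Measurable (fun p : ((Fin d → ℝ) × T) × ((Fin d → ℝ) × T) => Kf p.1 p.2) :=
    hKfmeas
  -- the key cross-term computation
  have cross : ∀ (μ ν : T → Measure (Fin d → ℝ)), (∀ t, IsProbabilityMeasure (μ t)) →
      (∀ t, IsProbabilityMeasure (ν t)) →
      (∫ p, Kf p.1 p.2 ∂((∑ t, h t • (μ t).map (fun y => (y, t))).prod
          (∑ t, h t • (ν t).map (fun y => (y, t)))))
        = ∑ t, ((h t : ℝ))^2 * ∫ p, Ky p.1 p.2 ∂((μ t).prod (ν t)) := by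
    intro μ ν hμ hν
    haveI := hμ; haveI := hν
    haveI : ∀ t, IsProbabilityMeasure ((μ t).map (fun y => (y, t))) :=
      fun t => Measure.isProbabilityMeasure_map (hemeas t).aemeasurable
    haveI : ∀ t, IsProbabilityMeasure ((ν t).map (fun y => (y, t))) :=
      fun t => Measure.isProbabilityMeasure_map (hemeas t).aemeasurable
    rw [prod_finset_sum_smul h h (fun t => (μ t).map (fun y => (y, t)))
      (fun t => (ν t).map (fun y => (y, t)))]
    have hint : ∀ s t : T, Integrable (fun p : ((Fin d → ℝ) × T) × ((Fin d → ℝ) × T) => Kf p.1 p.2)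
        (((μ s).map (fun y => (y, s))).prod ((ν t).map (fun y => (y, t)))) := by
      intro s t
      refine integrable_of_bound hKfmeas'.aestronglyMeasurable B (fun z => ?_)
      rw [hKf]
      simp only
      by_cases hz : z.1.2 = z.2.2
      · rw [if_pos hz, mul_one]; exact hB _ _
      · rw [if_neg hz, mul_zero, abs_zero]; exact hB0
    simp only [nnsmul_measure_eq]
    have hout : ∀ s : T, Integrable (fun p : ((Fin d → ℝ) × T) × ((Fin d → ℝ) × T) => Kf p.1 p.2)
        (∑ t : T, ((h s * h t : ℝ≥0) : ENNReal) • (((μ s).map (fun y => (y, s))).prod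
          ((ν t).map (fun y => (y, t))))) := by
      intro s
      refine integrable_finset_sum_measure.mpr (fun t _ => ?_)
      exact (hint s t).smul_measure ENNReal.coe_ne_top
    rw [integral_finset_sum_measure (fun s _ => hout s)]
    refine Finset.sum_congr rfl fun s _ => ?_
    rw [integral_finset_sum_measure (fun t _ => (hint s t).smul_measure ENNReal.coe_ne_top)]
    have hterm : ∀ t : T, (∫ p, Kf p.1 p.2 ∂(((h s * h t : ℝ≥0) : ENNReal) •
        (((μ s).map (fun y => (y, s))).prod ((ν t).map (fun y => (y, t))))))
        = if s = t then ((h s : ℝ) * (h t : ℝ)) * ∫ p, Ky p.1 p.2 ∂((μ s).prod (ν t)) else 0 := by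
      intro t
      rw [integral_smul_measure]
      have hmapped : (((μ s).map (fun y => (y, s))).prod ((ν t).map (fun y => (y, t))))
          = ((μ s).prod (ν t)).map
              (Prod.map (fun y : Fin d → ℝ => (y, s)) (fun y : Fin d → ℝ => (y, t))) :=
        Measure.map_prod_map _ _ (hemeas s) (hemeas t)
      rw [hmapped, integral_map ((hemeas s).prodMap (hemeas t)).aemeasurable
        hKfmeas'.aestronglyMeasurable]
      by_cases hst : s = t
      · subst hst
        rw [if_pos rfl]
        have : ∀ w : (Fin d → ℝ) × (Fin d → ℝ),
            Kf (Prod.map (fun y : Fin d → ℝ => (y, s)) (fun y : Fin d → ℝ => (y, s)) w).1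
              (Prod.map (fun y : Fin d → ℝ => (y, s)) (fun y : Fin d → ℝ => (y, s)) w).2
            = Ky w.1 w.2 := by
          intro w
          simp [hKf, Prod.map]
        rw [integral_congr_ae (Filter.Eventually.of_forall this)]
        simp [ENNReal.toReal_mul, smul_eq_mul]
      · rw [if_neg hst]
        have : ∀ w : (Fin d → ℝ) × (Fin d → ℝ),
            Kf (Prod.map (fun y : Fin d → ℝ => (y, s)) (fun y : Fin d → ℝ => (y, t)) w).1
              (Prod.map (fun y : Fin d → ℝ => (y, s)) (fun y : Fin d → ℝ => (y, t)) w).2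
            = 0 := by
          intro w
          simp [hKf, Prod.map, hst]
        rw [integral_congr_ae (Filter.Eventually.of_forall this)]
        simp
    rw [Finset.sum_congr rfl fun t _ => hterm t]
    rw [Finset.sum_ite_eq Finset.univ s
      (fun t => ((h s : ℝ) * (h t : ℝ)) * ∫ p, Ky p.1 p.2 ∂((μ s).prod (ν t)))]
    rw [if_pos (Finset.mem_univ s)]
    ring
  have hdecomp : MMD2 Kf (∑ t, h t • (f t).map (fun y => (y, t)))
      (∑ t, h t • (g t).map (fun y => (y, t)))
      = ∑ t, ((h t : ℝ))^2 * MMD2 Ky (f t) (g t) := by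
    simp only [MMD2]
    rw [cross f f inferInstance inferInstance, cross f g inferInstance inferInstance,
      cross g g inferInstance inferInstance]
    rw [Finset.mul_sum, ← Finset.sum_sub_distrib, ← Finset.sum_add_distrib]
    refine Finset.sum_congr rfl fun t _ => ?_
    ring
  have hnn : ∀ t : T, 0 ≤ MMD2 Ky (f t) (g t) :=
    fun t => mmd2_nonneg Ky hKpd hKmeas B hB (f t) (g t)
  rw [hdecomp] at hzero
  have hz : ∀ t ∈ Finset.univ, ((h t : ℝ))^2 * MMD2 Ky (f t) (g t) = 0 :=
    (Finset.sum_eq_zero_iff_of_nonneg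
      (fun t _ => mul_nonneg (sq_nonneg _) (hnn t))).1 hzero
  have hfg : ∀ t, f t = g t := by
    intro t
    have h1 := hz t (Finset.mem_univ t)
    have hht : ((h t : ℝ))^2 ≠ 0 := pow_ne_zero _ (by exact_mod_cast (hpos t).ne')
    have h2 : MMD2 Ky (f t) (g t) = 0 := by
      rcases mul_eq_zero.1 h1 with h3 | h4
      · exact absurd h3 hht
      · exact h4
    exact hchar _ _ inferInstance inferInstance h2
  exact ⟨hfg, Finset.sum_congr rfl fun t _ => by rw [hfg t]⟩
end
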